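/- arXiv:math/0209056 — 2 statements merged into one kernel-verified Lean document; each statement's English description precedes it below -/
import Mathlib

section
/- Let H be a free abelian group of rank 2g with a ℤ-valued alternating (symplectic) pairing, let γ ∈ H, and let PD(γ) ∈ H* be the functional x ↦ (pairing of γ with x), so that PD(γ)(γ) = 0. On X(g,d) = ⊕_{i=0}^{d} Λ^{2g−i} H* ⊗ (ℤ[U]/U^{d−i+1}) define D_γ(ω ⊗ U^j) = ι_γ ω ⊗ U^j + PD(γ) ∧ ω ⊗ U^{j+1}, where ι_γ denotes contraction of Λ*H* with γ ∈ H, and where terms landing outside the truncations are declared zero via the natural maps. Then D_γ is well defined on X(g,d) and satisfies D_γ ∘ D_γ = 0, making (X(g,d), D_γ) a chain complex. -/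
open TensorProduct

set_option synthInstance.maxHeartbeats 1000000
set_option maxHeartbeats 2000000

section Aux
variable {R M : Type*} [CommRing R] [AddCommGroup M] [Module R M]
  (d : Module.Dual R M)

lemma contract_mem_pow (n : ℕ) (x : ExteriorAlgebra R M) (hx : x ∈ ⋀[R]^n M) :
    (CliffordAlgebra.contractLeft (Q := (0 : QuadraticForm R M)) d x ∈ ⋀[R]^(n-1) M)
      ∧ (n = 0 → CliffordAlgebra.contractLeft (Q := (0 : QuadraticForm R M)) d x = 0) := by
  induction hx using Submodule.pow_induction_on_left' with
  | algebraMap r =>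
      refine ⟨?_, fun _ => ?_⟩ <;>
        simp [CliffordAlgebra.contractLeft_algebraMap]
  | add x y i hx hy ihx ihy =>
      refine ⟨by simpa using add_mem ihx.1 ihy.1, fun h => ?_⟩
      simp [ihx.2 h, ihy.2 h]
  | mem_mul m hm i x hx ih =>
      obtain ⟨v, rfl⟩ := hm
      refine ⟨?_, by simp⟩
      rw [CliffordAlgebra.contractLeft_ι_mul]
      have h1 : d v • x ∈ ⋀[R]^(i.succ - 1) M := by
        simpa using Submodule.smul_mem _ _ hx
      refine sub_mem h1 ?_
      cases i with
      | zero =>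
          rw [ih.2 rfl, mul_zero]; exact zero_mem _
      | succ k =>
          have := Submodule.mul_mem_mul (LinearMap.mem_range_self (ExteriorAlgebra.ι R : M →ₗ[R] _) v) ih.1
          rw [← pow_succ'] at this
          simpa using this
end Aux

/-- The differential `D_γ(ω ⊗ U^j) = ι_γ ω ⊗ U^j + PD(γ) ∧ ω ⊗ U^{j+1}` on
`Λ*H* ⊗ ℤ[U]` (with `H` free of rank `2g`, `PD(γ) = ω(γ,·)` for an alternating
pairing `ω`, so `PD(γ)(γ) = 0`) preserves the truncation submodule `N` defining
`X(g,d) = (Λ*H* ⊗ ℤ[U])/N` — i.e. `D_γ` is well defined on `X(g,d)` — and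
satisfies `D_γ ∘ D_γ = 0`, so `(X(g,d), D_γ)` is a chain complex.
Here `N` is spanned by the elements `x ⊗ U^j` with `x ∈ Λ^n H*` and `j > d − (2g − n)`,
i.e. `d + n < 2g + j`, which are declared zero in `X(g,d)`. -/
theorem D_gamma_wellDefined_and_squares_to_zero (g d : ℕ)
    (ω : (Fin (2 * g) → ℤ) →ₗ[ℤ] (Fin (2 * g) → ℤ) →ₗ[ℤ] ℤ)
    (halt : ∀ x, ω x x = 0)
    (γ : Fin (2 * g) → ℤ)
    (D : (ExteriorAlgebra ℤ (Module.Dual ℤ (Fin (2 * g) → ℤ)) ⊗[ℤ] Polynomial ℤ) →ₗ[ℤ]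
        (ExteriorAlgebra ℤ (Module.Dual ℤ (Fin (2 * g) → ℤ)) ⊗[ℤ] Polynomial ℤ))
    (hD : D = TensorProduct.map
          (CliffordAlgebra.contractLeft
            (Q := (0 : QuadraticForm ℤ (Module.Dual ℤ (Fin (2 * g) → ℤ))))
            (Module.Dual.eval ℤ (Fin (2 * g) → ℤ) γ)) LinearMap.id
        + TensorProduct.map (LinearMap.mulLeft ℤ (ExteriorAlgebra.ι ℤ (ω γ)))
            (LinearMap.mulLeft ℤ (Polynomial.X : Polynomial ℤ)))
    (N : Submodule ℤ
        (ExteriorAlgebra ℤ (Module.Dual ℤ (Fin (2 * g) → ℤ)) ⊗[ℤ] Polynomial ℤ))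
    (hN : N = Submodule.span ℤ
        {z | ∃ n j : ℕ, d + n < 2 * g + j ∧
          ∃ x ∈ ⋀[ℤ]^n (Module.Dual ℤ (Fin (2 * g) → ℤ)),
            z = x ⊗ₜ[ℤ] ((Polynomial.X : Polynomial ℤ) ^ j)}) :
    (∀ z ∈ N, D z ∈ N) ∧ D ∘ₗ D = 0 := by
  set H := Module.Dual ℤ (Fin (2 * g) → ℤ)
  set φ := Module.Dual.eval ℤ (Fin (2 * g) → ℤ) γ
  set C := CliffordAlgebra.contractLeft (Q := (0 : QuadraticForm ℤ H)) φ
  set Mι := LinearMap.mulLeft ℤ (ExteriorAlgebra.ι ℤ (ω γ))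
  set Xm := LinearMap.mulLeft ℤ (Polynomial.X : Polynomial ℤ)
  constructor
  · intro z hz
    rw [hN] at hz ⊢
    induction hz using Submodule.span_induction with
    | mem z hz =>
        obtain ⟨n, j, hlt, x, hx, rfl⟩ := hz
        rw [hD]
        show TensorProduct.map C LinearMap.id (x ⊗ₜ[ℤ] ((Polynomial.X : Polynomial ℤ) ^ j))
          + TensorProduct.map Mι Xm (x ⊗ₜ[ℤ] ((Polynomial.X : Polynomial ℤ) ^ j)) ∈ _
        simp only [TensorProduct.map_tmul, LinearMap.id_apply]
        refine add_mem ?_ ?_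
        · refine Submodule.subset_span ⟨n - 1, j, ?_, _, (contract_mem_pow φ n x hx).1, rfl⟩
          exact lt_of_le_of_lt (by omega) hlt
        · have hmul : ExteriorAlgebra.ι ℤ (ω γ) * x ∈ ⋀[ℤ]^(n+1) H := by
            have := Submodule.mul_mem_mul (LinearMap.mem_range_self (ExteriorAlgebra.ι ℤ : H →ₗ[ℤ] _) (ω γ)) hx
            rw [← pow_succ'] at this
            exact this
          refine Submodule.subset_span ⟨n + 1, j + 1, by omega, _, hmul, ?_⟩
          simp [Mι, Xm, LinearMap.mulLeft_apply, pow_succ']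
    | zero => simp
    | add x y _ _ ihx ihy => simpa using add_mem ihx ihy
    | smul a x _ ih => rw [map_smul]; exact Submodule.smul_mem _ a ih
  · rw [hD]
    have hCC : C ∘ₗ C = 0 :=
      LinearMap.ext fun x => CliffordAlgebra.contractLeft_contractLeft φ x
    have hMM : Mι ∘ₗ Mι = 0 := by
      rw [← LinearMap.mulLeft_mul]
      rw [ExteriorAlgebra.ι_sq_zero, LinearMap.mulLeft_zero_eq_zero]
    have hcross : C ∘ₗ Mι + Mι ∘ₗ C = 0 := by
      refine LinearMap.ext fun x => ?_
      simp only [LinearMap.add_apply, LinearMap.comp_apply, LinearMap.mulLeft_apply,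
        LinearMap.zero_apply, Mι, C]
      rw [CliffordAlgebra.contractLeft_ι_mul]
      have : φ (ω γ) = 0 := halt γ
      simp [this]
    have expand : (TensorProduct.map C LinearMap.id + TensorProduct.map Mι Xm) ∘ₗ
        (TensorProduct.map C LinearMap.id + TensorProduct.map Mι Xm)
        = TensorProduct.map (C ∘ₗ C) LinearMap.id
          + (TensorProduct.map ((C ∘ₗ Mι) + (Mι ∘ₗ C)) Xm
          + TensorProduct.map (Mι ∘ₗ Mι) (Xm ∘ₗ Xm)) := by
      rw [LinearMap.add_comp, LinearMap.comp_add, LinearMap.comp_add,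
        ← TensorProduct.map_comp, ← TensorProduct.map_comp, ← TensorProduct.map_comp,
        ← TensorProduct.map_comp, TensorProduct.map_add_left]
      simp only [LinearMap.comp_id, LinearMap.id_comp]
      abel
    refine expand.trans ?_
    rw [hCC, hMM, hcross]
    simp
    rfl
end

section
/- Let L be a finite set of 'components' and let P be a set of n−1 unordered pairs of distinct elements of L (a multigraph with n = |L| vertices and n−1 edges) such that the graph (L, P) is connected. Then (L, P) is a tree, and moreover for every vertex ordering L = {K₁, …, Kₙ} arising from transforming P by slides into a 'linear chain', the linear chain has edge set {{Kᵢ, Kᵢ₊₁} : 1 ≤ i ≤ n−1}. Concretely: every connected graph on n vertices with n−1 edges admits a sequence of slides (replacing an edge {u,w} by {v,w} when {u,v} is also present) transforming it into a path graph. -/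
/-- A *slide*: replace an edge `{u,w}` by `{v,w}` when `{u,v}` is also an edge. -/
def Slide {V : Type*} (G G' : SimpleGraph V) : Prop :=
  ∃ u v w : V, v ≠ w ∧ s(u, v) ∈ G.edgeSet ∧ s(u, w) ∈ G.edgeSet ∧
    G'.edgeSet = (G.edgeSet \ {s(u, w)}) ∪ {s(v, w)}

open SimpleGraph Relation

section Helpers

variable {V W : Type*}

lemma reach_del (G : SimpleGraph V) {v w : V}
    (hR : (G \ fromEdgeSet {s(v, w)}).Reachable v w) :
    ∀ {a b : V}, G.Walk a b → (G \ fromEdgeSet {s(v, w)}).Reachable a b := by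
  intro a b p
  induction p with
  | nil => exact Reachable.refl _
  | @cons x y z h q ih =>
    refine Reachable.trans ?_ ih
    by_cases he : s(x, y) = s(v, w)
    · rw [Sym2.eq_iff] at he
      rcases he with ⟨rfl, rfl⟩ | ⟨rfl, rfl⟩
      · exact hR
      · exact hR.symm
    · exact Adj.reachable (by simp [sdiff_adj, fromEdgeSet_adj, he, h])

lemma connected_card_le_aux : ∀ (k : ℕ) {V : Type*} [Fintype V] (G : SimpleGraph V),
    G.edgeSet.ncard = k → G.Connected → Fintype.card V - 1 ≤ k := by
  intro k
  induction k using Nat.strong_induction_on with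
  | _ k IH =>
    intro V _ G hk hconn
    classical
    by_cases hac : G.IsAcyclic
    · have hT : G.IsTree := ⟨hconn, hac⟩
      have h1 := hT.card_edgeFinset
      have h2 : G.edgeSet.ncard = G.edgeFinset.card := by
        simp [edgeFinset, Set.ncard_eq_toFinset_card']
      omega
    · rw [isAcyclic_iff_forall_edge_isBridge] at hac
      push_neg at hac
      obtain ⟨e, he, hnb⟩ := hac
      induction e with
      | _ v w =>
      rw [isBridge_iff] at hnb
      push_neg at hnb
      have hadj : G.Adj v w := he
      have hR : (G \ fromEdgeSet {s(v, w)}).Reachable v w := hnb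
      set G₂ := G \ fromEdgeSet {s(v, w)} with hG₂
      have hconn₂ : G₂.Connected := by
        haveI := hconn.nonempty
        refine Connected.mk fun a b => ?_
        obtain ⟨p⟩ := hconn a b
        exact reach_del G hR p
      have hE₂ : G₂.edgeSet = G.edgeSet \ {s(v, w)} := by
        rw [hG₂, edgeSet_sdiff, edgeSet_fromEdgeSet, edgeSet_sdiff_sdiff_isDiag]
      have hfin : G.edgeSet.Finite := Set.toFinite _
      have hk1 : 1 ≤ k := by
        rw [← hk]
        exact (Set.ncard_pos hfin).mpr ⟨_, he⟩
      have hcard₂ : G₂.edgeSet.ncard = k - 1 := by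
        rw [hE₂, Set.ncard_diff_singleton_of_mem he, hk]
      have := IH (k - 1) (by omega) G₂ hcard₂ hconn₂
      omega

lemma isTree_of_connected_card [Fintype V] (G : SimpleGraph V)
    (hconn : G.Connected) (hcard : G.edgeSet.ncard = Fintype.card V - 1) : G.IsTree := by
  classical
  refine ⟨hconn, ?_⟩
  by_contra hac
  rw [isAcyclic_iff_forall_edge_isBridge] at hac
  push_neg at hac
  obtain ⟨e, he, hnb⟩ := hac
  induction e with
  | _ v w =>
  rw [isBridge_iff] at hnb
  push_neg at hnb
  have hadj : G.Adj v w := he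
  have hR : (G \ fromEdgeSet {s(v, w)}).Reachable v w := hnb
  set G₂ := G \ fromEdgeSet {s(v, w)} with hG₂
  have hconn₂ : G₂.Connected := by
    haveI := hconn.nonempty
    refine Connected.mk fun a b => ?_
    obtain ⟨p⟩ := hconn a b
    exact reach_del G hR p
  have hE₂ : G₂.edgeSet = G.edgeSet \ {s(v, w)} := by
    rw [hG₂, edgeSet_sdiff, edgeSet_fromEdgeSet, edgeSet_sdiff_sdiff_isDiag]
  have hfin : G.edgeSet.Finite := Set.toFinite _
  have hone : 1 ≤ G.edgeSet.ncard := (Set.ncard_pos hfin).mpr ⟨_, he⟩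
  have hcard₂ : G₂.edgeSet.ncard = Fintype.card V - 2 := by
    rw [hE₂, Set.ncard_diff_singleton_of_mem he, hcard]
    omega
  have hle := connected_card_le_aux _ G₂ hcard₂ hconn₂
  have hpos : 1 < Fintype.card V := by
    haveI : Nontrivial V := ⟨v, w, hadj.ne⟩
    exact Fintype.one_lt_card
  omega

lemma edgeSet_map (f : V ↪ W) (H : SimpleGraph V) :
    (H.map f).edgeSet = Sym2.map f '' H.edgeSet := by
  ext e
  induction e with
  | _ a b =>
  simp only [mem_edgeSet, map_adj, Set.mem_image]
  constructor
  · rintro ⟨u, v, h, rfl, rfl⟩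
    exact ⟨s(u, v), h, Sym2.map_pair_eq f u v⟩
  · rintro ⟨e', he', hm⟩
    induction e' with
    | _ x y =>
    rw [Sym2.map_pair_eq, Sym2.eq_iff] at hm
    rcases hm with ⟨rfl, rfl⟩ | ⟨rfl, rfl⟩
    · exact ⟨x, y, he', rfl, rfl⟩
    · exact ⟨y, x, he'.symm, rfl, rfl⟩

lemma slide_map_sup (f : V ↪ W) (A : SimpleGraph W)
    (hA : ∀ e ∈ A.edgeSet, ∀ x y : V, e ≠ s(f x, f y))
    {H H' : SimpleGraph V} (h : Slide H H') :
    Slide (H.map f ⊔ A) (H'.map f ⊔ A) := by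
  obtain ⟨u, v, w, hvw, h1, h2, hE⟩ := h
  refine ⟨f u, f v, f w, fun hc => hvw (f.injective hc), ?_, ?_, ?_⟩
  · rw [edgeSet_sup, _root_.edgeSet_map]
    exact Or.inl ⟨_, h1, Sym2.map_pair_eq f u v⟩
  · rw [edgeSet_sup, _root_.edgeSet_map]
    exact Or.inl ⟨_, h2, Sym2.map_pair_eq f u w⟩
  · have hinj : Function.Injective (Sym2.map f) := Sym2.map.injective f.injective
    rw [edgeSet_sup, edgeSet_sup, _root_.edgeSet_map, _root_.edgeSet_map, hE, Set.image_union,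
      Set.image_diff hinj, Set.image_singleton, Set.image_singleton,
      Sym2.map_pair_eq, Sym2.map_pair_eq]
    have hnA : s(f u, f w) ∉ A.edgeSet := fun hc => hA _ hc u w rfl
    ext e
    simp only [Set.mem_union, Set.mem_diff, Set.mem_singleton_iff]
    constructor
    · rintro ((⟨he, hne⟩ | rfl) | hea)
      · exact Or.inl ⟨Or.inl he, hne⟩
      · exact Or.inr rfl
      · exact Or.inl ⟨Or.inr hea, fun hc => hnA (hc ▸ hea)⟩
    · rintro (⟨(he | hea), hne⟩ | rfl)
      · exact Or.inl (Or.inl ⟨he, hne⟩)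
      · exact Or.inr hea
      · exact Or.inl (Or.inr rfl)

lemma slide_map (f : V ↪ W) {H H' : SimpleGraph V} (h : Slide H H') :
    Slide (H.map f) (H'.map f) := by
  have := slide_map_sup f ⊥ (by simp) h
  simpa using this

lemma slides_map_sup (f : V ↪ W) (A : SimpleGraph W)
    (hA : ∀ e ∈ A.edgeSet, ∀ x y : V, e ≠ s(f x, f y))
    {H H' : SimpleGraph V} (h : Relation.ReflTransGen Slide H H') :
    Relation.ReflTransGen Slide (H.map f ⊔ A) (H'.map f ⊔ A) :=
  Relation.ReflTransGen.lift (fun Q : SimpleGraph V => Q.map f ⊔ A) (fun _ _ hs => slide_map_sup f A hA hs) _ _ h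

lemma slides_map (f : V ↪ W) {H H' : SimpleGraph V} (h : Relation.ReflTransGen Slide H H') :
    Relation.ReflTransGen Slide (H.map f) (H'.map f) :=
  Relation.ReflTransGen.lift (fun Q : SimpleGraph V => Q.map f) (fun _ _ hs => slide_map f hs) _ _ h

lemma exists_leaf [Fintype V] (G : SimpleGraph V) (hT : G.IsTree)
    (h2 : 2 ≤ Fintype.card V) :
    ∃ x v₀ : V, x ≠ v₀ ∧ (∀ a : V, G.Adj x a ↔ a = v₀) := by
  classical
  have hdeg1 : ∀ x : V, 1 ≤ G.degree x := by
    intro x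
    obtain ⟨y, hy⟩ := Fintype.exists_ne_of_one_lt_card (by omega) x
    obtain ⟨p⟩ := hT.isConnected x y
    have hnp : 0 < p.length := by
      rw [← Walk.not_nil_iff_lt_length]
      exact Walk.not_nil_of_ne (Ne.symm hy)
    have := p.adj_getVert_succ hnp
    rw [Walk.getVert_zero] at this
    exact (G.degree_pos_iff_exists_adj x).mpr ⟨_, this⟩
  have hsum : ∑ v : V, G.degree v = 2 * G.edgeFinset.card :=
    G.sum_degrees_eq_twice_card_edges
  have hedge : G.edgeFinset.card + 1 = Fintype.card V := hT.card_edgeFinset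
  have hx : ∃ x : V, G.degree x = 1 := by
    by_contra hc
    push_neg at hc
    have h2d : ∀ x : V, 2 ≤ G.degree x := fun x => by
      have := hdeg1 x; have := hc x; omega
    have : 2 * Fintype.card V ≤ ∑ v : V, G.degree v := by
      calc 2 * Fintype.card V = ∑ _v : V, 2 := by simp [mul_comm]
      _ ≤ ∑ v : V, G.degree v := Finset.sum_le_sum fun i _ => h2d i
    omega
  obtain ⟨x, hx⟩ := hx
  have : (G.neighborFinset x).card = 1 := by rwa [card_neighborFinset_eq_degree]
  obtain ⟨v₀, hv₀⟩ := Finset.card_eq_one.mp this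
  have hadj : ∀ a : V, G.Adj x a ↔ a = v₀ := by
    intro a
    rw [← mem_neighborFinset, hv₀, Finset.mem_singleton]
  exact ⟨x, v₀, G.ne_of_adj ((hadj v₀).mpr rfl), hadj⟩

lemma reachable_of_walk_avoid {G : SimpleGraph V} {x : V} :
    ∀ {y z : V} (p : G.Walk y z) (hy : y ≠ x) (hz : z ≠ x), x ∉ p.support →
    (G.comap (Function.Embedding.subtype fun a => a ≠ x)).Reachable ⟨y, hy⟩ ⟨z, hz⟩ := by
  intro y z p
  induction p with
  | nil => intro _ _ _; exact Reachable.refl _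
  | @cons a b c h q ih =>
    intro hy hz hsup
    rw [Walk.support_cons, List.mem_cons] at hsup
    push_neg at hsup
    have hb : b ≠ x := fun hc => hsup.2 (hc ▸ q.start_mem_support)
    refine Reachable.trans (Adj.reachable ?_) (ih hb hz hsup.2)
    simpa [comap_adj] using h

lemma not_mem_path_support {G : SimpleGraph V} {x v₀ : V}
    (hleaf : ∀ a : V, G.Adj x a ↔ a = v₀) {y z : V} (hy : y ≠ x) (hz : z ≠ x)
    {p : G.Walk y z} (hp : p.IsPath) : x ∉ p.support := by
  classical
  intro hx
  set q1 := p.takeUntil x hx with hq1def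
  set q2 := p.dropUntil x hx with hq2def
  obtain ⟨a1, h1, q1', hq1'⟩ := Walk.exists_eq_cons_of_ne (Ne.symm hy) q1.reverse
  obtain ⟨a2, h2, q2', hq2'⟩ := Walk.exists_eq_cons_of_ne (Ne.symm hz) q2
  have ha1 : a1 = v₀ := (hleaf a1).mp h1
  have ha2 : a2 = v₀ := (hleaf a2).mp h2
  have hv1 : v₀ ∈ q1.support := by
    have : v₀ ∈ q1.reverse.support := by
      rw [hq1', Walk.support_cons]
      exact List.mem_cons_of_mem _ (ha1 ▸ q1'.start_mem_support)
    rwa [Walk.support_reverse, List.mem_reverse] at this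
  have hv2 : v₀ ∈ q2.support.tail := by
    rw [hq2', Walk.support_cons, List.tail_cons]
    exact ha2 ▸ q2'.start_mem_support
  have hnodup : (q1.support ++ q2.support.tail).Nodup := by
    rw [← Walk.support_append, hq1def, hq2def, Walk.take_spec]
    exact hp.support_nodup
  exact (List.disjoint_of_nodup_append hnodup) hv1 hv2

lemma tree_del_leaf {G : SimpleGraph V} (hT : G.IsTree) {x v₀ : V}
    (hxv : x ≠ v₀) (hleaf : ∀ a : V, G.Adj x a ↔ a = v₀) :
    (G.comap (Function.Embedding.subtype fun a => a ≠ x)).IsTree := by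
  classical
  constructor
  · haveI : Nonempty {y : V // y ≠ x} := ⟨⟨v₀, Ne.symm hxv⟩⟩
    refine Connected.mk ?_
    rintro ⟨y, hy⟩ ⟨z, hz⟩
    obtain ⟨w⟩ := hT.isConnected y z
    exact reachable_of_walk_avoid w.toPath.1 hy hz
      (not_mem_path_support hleaf hy hz w.toPath.2)
  · intro v c hc
    have := hc.map (f := (Embedding.comap (Function.Embedding.subtype fun a => a ≠ x) G).toHom)
      (Function.Embedding.subtype _).injective
    exact hT.IsAcyclic _ this

namespace PendWork

open Fin

def Pend (m : ℕ) (j : Fin (m + 1)) : SimpleGraph (Fin (m + 2)) :=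
  (pathGraph (m + 1)).map Fin.castSuccEmb ⊔ edge (Fin.last (m + 1)) j.castSucc

lemma pend_def (m : ℕ) (j : Fin (m + 1)) : Pend m j =
    (pathGraph (m + 1)).map Fin.castSuccEmb ⊔ edge (Fin.last (m + 1)) j.castSucc := rfl

lemma castSucc_ne_last {m : ℕ} (i : Fin (m + 1)) : i.castSucc ≠ Fin.last (m + 1) :=
  (Fin.castSucc_lt_last i).ne

lemma pend_edgeSet (m : ℕ) (j : Fin (m + 1)) :
    (Pend m j).edgeSet =
      (Sym2.map Fin.castSuccEmb '' (pathGraph (m + 1)).edgeSet) ∪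
        {s(Fin.last (m + 1), j.castSucc)} := by
  rw [Pend, edgeSet_sup, _root_.edgeSet_map, edge_edgeSet_of_ne (castSucc_ne_last j).symm]

lemma last_not_mem_image {m : ℕ} (e : Sym2 (Fin (m + 1)))
    (c : Fin (m + 1)) :
    Sym2.map Fin.castSuccEmb e ≠ s(c.castSucc, Fin.last (m + 1)) := by
  induction e with
  | _ x y =>
  rw [Sym2.map_pair_eq]
  intro h
  rw [Sym2.eq_iff] at h
  rcases h with ⟨-, hc⟩ | ⟨hc, -⟩
  · exact castSucc_ne_last y hc
  · exact castSucc_ne_last x hc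

lemma pend_slide {m : ℕ} (j : Fin (m + 1)) (hj : j.val < m) :
    Slide (Pend m j) (Pend m ⟨j.val + 1, by omega⟩) := by
  set j' : Fin (m + 1) := ⟨j.val + 1, by omega⟩ with hj'
  refine ⟨j.castSucc, j'.castSucc, Fin.last (m + 1), castSucc_ne_last j', ?_, ?_, ?_⟩
  · rw [pend_edgeSet]
    refine Or.inl ⟨s(j, j'), ?_, Sym2.map_pair_eq _ _ _⟩
    exact (mem_edgeSet _).mpr (pathGraph_adj.mpr (Or.inl rfl))
  · rw [pend_edgeSet]
    exact Or.inr (Sym2.eq_swap ▸ rfl)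
  · rw [pend_edgeSet, pend_edgeSet]
    have h1 : s(j.castSucc, Fin.last (m + 1)) ∉
        Sym2.map Fin.castSuccEmb '' (pathGraph (m + 1)).edgeSet := by
      rintro ⟨e, -, he⟩
      exact last_not_mem_image e j he
    ext e
    simp only [Set.mem_union, Set.mem_diff, Set.mem_singleton_iff]
    constructor
    · rintro (he | rfl)
      · refine Or.inl ⟨Or.inl he, fun hc => h1 (hc ▸ he)⟩
      · exact Or.inr (Sym2.eq_swap)
    · rintro (⟨(he | rfl), hne⟩ | rfl)
      · exact Or.inl he
      · exact absurd Sym2.eq_swap hne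
      · exact Or.inr Sym2.eq_swap

lemma pend_slides (m : ℕ) : ∀ (k : ℕ) (j : Fin (m + 1)), j.val + k = m →
    Relation.ReflTransGen Slide (Pend m j) (Pend m (Fin.last m)) := by
  intro k
  induction k with
  | zero =>
    intro j hj
    have : j = Fin.last m := Fin.ext (by simpa using hj)
    rw [this]
  | succ k ih =>
    intro j hj
    exact Relation.ReflTransGen.head (pend_slide j (by omega))
      (ih ⟨j.val + 1, by omega⟩ (by simp; omega))

lemma pend_last (m : ℕ) : Pend m (Fin.last m) = pathGraph (m + 2) := by
  ext a b
  rw [Pend, sup_adj, map_adj, edge_adj, pathGraph_adj]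
  constructor
  · rintro (⟨i, k, hik, rfl, rfl⟩ | ⟨(⟨rfl, rfl⟩ | ⟨rfl, rfl⟩), -⟩)
    · rw [pathGraph_adj] at hik
      simpa using hik
    · simp
    · simp
  · intro h
    by_cases ha : a.val < m + 1 <;> by_cases hb : b.val < m + 1
    · refine Or.inl ⟨⟨a.val, ha⟩, ⟨b.val, hb⟩, pathGraph_adj.mpr ?_, ?_, ?_⟩
      · exact h
      · exact Fin.ext rfl
      · exact Fin.ext rfl
    · have hb' : b.val = m + 1 := by omega
      have ha' : a.val = m := by omega
      refine Or.inr ⟨Or.inr ⟨Fin.ext (by simpa using ha'), Fin.ext hb'⟩, by omega⟩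
    · have ha' : a.val = m + 1 := by omega
      have hb' : b.val = m := by omega
      refine Or.inr ⟨Or.inl ⟨Fin.ext ha', Fin.ext (by simpa using hb')⟩, by omega⟩
    · omega

end PendWork

end Helpers

section Main

open PendWork

lemma adj_subsingleton {W : Type*} [Subsingleton W] (H : SimpleGraph W) (a b : W) :
    ¬H.Adj a b := fun h => h.ne (Subsingleton.elim a b)

universe u

lemma tree_slides : ∀ (n : ℕ) {V : Type u} [Fintype V] (G : SimpleGraph V),
    Fintype.card V = n → G.IsTree →
    ∃ P : SimpleGraph V, Relation.ReflTransGen Slide G P ∧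
      Nonempty (P ≃g SimpleGraph.pathGraph n) := by
  intro n
  induction n using Nat.strong_induction_on with
  | _ n IH =>
  intro V _ G hn hT
  match n, hn with
  | 0, hn =>
    haveI := hT.isConnected.nonempty
    exact absurd hn Fintype.card_ne_zero
  | 1, hn =>
    haveI : Subsingleton V := Fintype.card_le_one_iff_subsingleton.mp (le_of_eq hn)
    refine ⟨G, Relation.ReflTransGen.refl, ⟨⟨Fintype.equivFinOfCardEq hn, ?_⟩⟩⟩
    intro a b
    exact iff_of_false (adj_subsingleton _ _ _) (adj_subsingleton _ _ _)
  | (m + 2), hn =>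
    classical
    obtain ⟨x, v₀, hxv, hleaf⟩ := exists_leaf G hT (by omega)
    set f : {y : V // y ≠ x} ↪ V := Function.Embedding.subtype fun a => a ≠ x with hf
    set G' : SimpleGraph {y : V // y ≠ x} := G.comap f with hG'
    have hT' : G'.IsTree := tree_del_leaf hT hxv hleaf
    have hcard' : Fintype.card {y : V // y ≠ x} = m + 1 := by
      have h1 : Fintype.card {y : V // y = x} = 1 := Fintype.card_subtype_eq x
      have h2 : Fintype.card {y : V // ¬ y = x} =
          Fintype.card V - Fintype.card {y : V // y = x} := Fintype.card_subtype_compl _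
      have h3 : Fintype.card {y : V // y ≠ x} = Fintype.card {y : V // ¬ y = x} := rfl
      omega
    obtain ⟨P', hP's, ⟨φ⟩⟩ := IH (m + 1) (by omega) G' hcard' hT'
    have hv₀x : v₀ ≠ x := Ne.symm hxv
    have hGeq : G = G'.map f ⊔ edge x v₀ := by
      ext a b
      rw [sup_adj, map_adj, edge_adj]
      constructor
      · intro h
        by_cases ha : a = x
        · subst ha
          exact Or.inr ⟨Or.inl ⟨rfl, (hleaf b).mp h⟩, h.ne⟩
        · by_cases hb : b = x
          · subst hb
            exact Or.inr ⟨Or.inr ⟨(hleaf a).mp h.symm, rfl⟩, h.ne⟩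
          · exact Or.inl ⟨⟨a, ha⟩, ⟨b, hb⟩, h, rfl, rfl⟩
      · rintro (⟨u, v, huv, rfl, rfl⟩ | ⟨(⟨ha, hb⟩ | ⟨ha, hb⟩), -⟩)
        · exact huv
        · rw [ha, hb]; exact (hleaf _).mpr rfl
        · rw [ha, hb]; exact ((hleaf _).mpr rfl).symm
    have hA : ∀ e ∈ (edge x v₀).edgeSet, ∀ p q : {y : V // y ≠ x}, e ≠ s(f p, f q) := by
      intro e he p q
      rw [edge_edgeSet_of_ne hxv, Set.mem_singleton_iff] at he
      subst he
      intro hc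
      rw [Sym2.eq_iff] at hc
      rcases hc with ⟨hc, -⟩ | ⟨hc, -⟩
      · exact p.2 hc.symm
      · exact q.2 hc.symm
    have hstep1 : Relation.ReflTransGen Slide G (P'.map f ⊔ edge x v₀) := by
      rw [hGeq]
      exact slides_map_sup f (edge x v₀) hA hP's
    let g : Fin (m + 2) → V := Fin.lastCases x (fun i => (φ.symm i : V))
    have hg_last : g (Fin.last (m + 1)) = x := Fin.lastCases_last
    have hg_cast : ∀ i : Fin (m + 1), g i.castSucc = (φ.symm i : V) :=
      fun i => Fin.lastCases_castSucc i
    have hcs : ∀ u : Fin (m + 1), u.castSucc ≠ Fin.last (m + 1) :=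
      fun u => (Fin.castSucc_lt_last u).ne
    have hginj : Function.Injective g := by
      intro i k hik
      induction i using Fin.lastCases with
      | last =>
        induction k using Fin.lastCases with
        | last => rfl
        | cast k =>
          rw [hg_last, hg_cast] at hik
          exact absurd hik.symm (φ.symm k).2
      | cast i =>
        induction k using Fin.lastCases with
        | last =>
          rw [hg_last, hg_cast] at hik
          exact absurd hik (φ.symm i).2
        | cast k =>
          rw [hg_cast, hg_cast] at hik
          rw [φ.symm.injective (Subtype.ext hik)]
    have hgsurj : Function.Surjective g := by
      intro a
      by_cases ha : a = x
      · exact ⟨Fin.last (m + 1), by rw [hg_last, ha]⟩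
      · refine ⟨(φ ⟨a, ha⟩).castSucc, ?_⟩
        rw [hg_cast, φ.symm_apply_apply]
    let ψ : Fin (m + 2) ≃ V := Equiv.ofBijective g ⟨hginj, hgsurj⟩
    have hψ : ∀ i, ψ i = g i := fun _ => rfl
    set j : Fin (m + 1) := φ ⟨v₀, hv₀x⟩ with hj
    have hjiff : ∀ k : Fin (m + 1), ((φ.symm k : V) = v₀ ↔ k = j) := by
      intro k
      constructor
      · intro h
        have : φ.symm k = ⟨v₀, hv₀x⟩ := Subtype.ext h
        rw [hj, ← this, φ.apply_symm_apply]
      · intro h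
        rw [h, hj, φ.symm_apply_apply]
    have key : ∀ i k : Fin (m + 2),
        (P'.map f ⊔ edge x v₀).Adj (ψ i) (ψ k) ↔ (Pend m j).Adj i k := by
      intro i k
      rw [pend_def, hψ, hψ, sup_adj, sup_adj, map_adj, map_adj, edge_adj, edge_adj]
      simp only [Fin.coe_castSuccEmb]
      induction i using Fin.lastCases with
      | last =>
        induction k using Fin.lastCases with
        | last =>
          rw [hg_last]
          constructor
          · rintro (⟨u, v, huv, hu, hv⟩ | ⟨-, hne⟩)
            · exact absurd hu u.2
            · exact absurd rfl hne
          · rintro (⟨u, v, huv, hu, hv⟩ | ⟨-, hne⟩)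
            · exact absurd hu (hcs u)
            · exact absurd rfl hne
        | cast k =>
          rw [hg_last, hg_cast]
          constructor
          · rintro (⟨u, v, huv, hu, hv⟩ | ⟨(⟨-, hv⟩ | ⟨hx', -⟩), -⟩)
            · exact absurd hu u.2
            · exact Or.inr ⟨Or.inl ⟨rfl, by rw [(hjiff k).mp hv]⟩, (hcs k).symm⟩
            · exact absurd hx'.symm hv₀x
          · rintro (⟨u, v, huv, hu, hv⟩ | ⟨(⟨-, hv⟩ | ⟨hl, -⟩), -⟩)
            · exact absurd hu (hcs u)
            · refine Or.inr ⟨Or.inl ⟨rfl, (hjiff k).mpr (Fin.castSucc_injective _ hv)⟩, ?_⟩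
              exact fun hc => (φ.symm k).2 hc.symm
            · exact absurd hl.symm (hcs j)
      | cast i =>
        induction k using Fin.lastCases with
        | last =>
          rw [hg_last, hg_cast]
          constructor
          · rintro (⟨u, v, huv, hu, hv⟩ | ⟨(⟨hx', -⟩ | ⟨hv, -⟩), -⟩)
            · exact absurd hv v.2
            · exact absurd hx' (φ.symm i).2
            · exact Or.inr ⟨Or.inr ⟨by rw [(hjiff i).mp hv], rfl⟩, hcs i⟩
          · rintro (⟨u, v, huv, hu, hv⟩ | ⟨(⟨hl, -⟩ | ⟨hi, -⟩), -⟩)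
            · exact absurd hv (hcs v)
            · exact absurd hl (hcs i)
            · refine Or.inr ⟨Or.inr ⟨(hjiff i).mpr (Fin.castSucc_injective _ hi), rfl⟩, ?_⟩
              exact fun hc => (φ.symm i).2 hc
        | cast k =>
          rw [hg_cast, hg_cast]
          constructor
          · rintro (⟨u, v, huv, hu, hv⟩ | ⟨(⟨hx', -⟩ | ⟨-, hx'⟩), -⟩)
            · have hu' : u = φ.symm i := Subtype.ext hu
              have hv' : v = φ.symm k := Subtype.ext hv
              subst hu'
              subst hv'
              exact Or.inl ⟨i, k, φ.symm.map_adj_iff.mp huv, rfl, rfl⟩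
            · exact absurd hx' (φ.symm i).2
            · exact absurd hx' (φ.symm k).2
          · rintro (⟨u, v, huv, hu, hv⟩ | ⟨(⟨hl, -⟩ | ⟨-, hl⟩), -⟩)
            · have hu' : u = i := Fin.castSucc_injective _ hu
              have hv' : v = k := Fin.castSucc_injective _ hv
              subst hu'
              subst hv'
              exact Or.inl ⟨φ.symm u, φ.symm v, φ.symm.map_adj_iff.mpr huv, rfl, rfl⟩
            · exact absurd hl (hcs i)
            · exact absurd hl (hcs k)
    have hFP : P'.map f ⊔ edge x v₀ = (Pend m j).map ψ.toEmbedding := by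
      ext a b
      obtain ⟨i, rfl⟩ := ψ.surjective a
      obtain ⟨k, rfl⟩ := ψ.surjective b
      rw [key i k]
      exact (map_adj_apply).symm
    have hstep2 : Relation.ReflTransGen Slide ((Pend m j).map ψ.toEmbedding)
        ((pathGraph (m + 2)).map ψ.toEmbedding) := by
      rw [← pend_last m]
      exact slides_map ψ.toEmbedding (pend_slides m (m - j.val) j (by omega))
    refine ⟨(pathGraph (m + 2)).map ψ.toEmbedding, ?_,
      ⟨(Iso.map ψ (pathGraph (m + 2))).symm⟩⟩
    rw [hFP] at hstep1
    exact hstep1.trans hstep2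

end Main


/-- A connected graph on `n` vertices with `n − 1` edges is a tree, and it admits
a finite sequence of slides transforming it into a path graph (a linear chain, whose
edges are exactly the consecutive pairs of some ordering of the vertices). -/
theorem connected_graph_is_tree_slides_to_path
    {V : Type*} [Fintype V] (G : SimpleGraph V)
    (hconn : G.Connected) (hcard : G.edgeSet.ncard = Fintype.card V - 1) :
    G.IsTree ∧
    ∃ P : SimpleGraph V, Relation.ReflTransGen Slide G P ∧
      Nonempty (P ≃g SimpleGraph.pathGraph (Fintype.card V)) := by
  have hT : G.IsTree := isTree_of_connected_card G hconn hcard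
  exact ⟨hT, tree_slides (Fintype.card V) G rfl hT⟩
end
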